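/- For quaternions u, v ∈ ℍ, the equality (star u)·i·u = (star v)·i·v holds if and only if there exists a quaternion z with zero j-component, zero k-component, and ‖z‖ = 1, such that v = z·u. -/

import Mathlib

open Finset
open scoped Quaternion

/-- The imaginary unit `i` of the quaternions. -/
def qI : ℍ := ⟨0, 1, 0, 0⟩

/-- A quaternion is a *unit complex* quaternion if its `j`- and `k`-components vanish
and it has norm `1`. -/
def IsUnitComplexQ (z : ℍ) : Prop := z.imJ = 0 ∧ z.imK = 0 ∧ ‖z‖ = 1

lemma norm_qI : ‖qI‖ = 1 := by
  have h : ‖qI‖ * ‖qI‖ = 1 := by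
    rw [← Quaternion.normSq_eq_norm_mul_self]
    rw [Quaternion.normSq_def']; simp [qI]
  nlinarith [norm_nonneg qI]

/-- `(star u)·i·u = (star v)·i·v` iff `v = z·u` for some unit complex quaternion `z`. -/
theorem star_i_self_eq_iff (u v : ℍ) :
    star u * qI * u = star v * qI * v ↔
      ∃ z : ℍ, z.imJ = 0 ∧ z.imK = 0 ∧ ‖z‖ = 1 ∧ v = z * u := by
  constructor
  · intro h
    by_cases hu : u = 0
    · subst hu
      simp only [star_zero, zero_mul, mul_zero] at h
      have hn : ‖star v * qI * v‖ = 0 := by rw [← h]; simp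
      rw [norm_mul, norm_mul, Quaternion.norm_star, norm_qI] at hn
      have hv0 : v = 0 := by
        rcases mul_eq_zero.1 hn with h' | h'
        · rcases mul_eq_zero.1 h' with h'' | h''
          · exact norm_eq_zero.1 h''
          · norm_num at h''
        · exact norm_eq_zero.1 h'
      exact ⟨1, by simp, by simp, by simp, by simp [hv0]⟩
    · set z := v * u⁻¹ with hz
      have hv : v = z * u := by rw [hz, inv_mul_cancel_right₀ hu]
      -- norms equal
      have hnorm : ‖u‖ = ‖v‖ := by
        have := congrArg norm h
        rw [norm_mul, norm_mul, norm_mul, norm_mul, Quaternion.norm_star,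
          Quaternion.norm_star, norm_qI] at this
        nlinarith [norm_nonneg u, norm_nonneg v]
      have hu' : ‖u‖ ≠ 0 := norm_ne_zero_iff.2 hu
      have hzn : ‖z‖ = 1 := by
        rw [hz, norm_mul, norm_inv, ← hnorm]
        field_simp
      have hzz : z * star z = 1 := by
        rw [Quaternion.self_mul_star, Quaternion.normSq_eq_norm_mul_self, hzn]
        norm_num
      have hzz' : star z * z = 1 := by
        rw [Quaternion.star_mul_self, Quaternion.normSq_eq_norm_mul_self, hzn]
        norm_num
      -- qI = star z * qI * z
      have hq : qI = star z * qI * z := by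
        have h2 : star u * qI * u = star u * (star z * qI * z) * u := by
          rw [hv] at h
          rw [h, star_mul]
          noncomm_ring
        have h3 : qI * u = (star z * qI * z) * u :=
          mul_left_cancel₀ (star_ne_zero.2 hu) (by rw [← mul_assoc, ← mul_assoc]; exact h2)
        exact mul_right_cancel₀ hu h3
      have hcomm : z * qI = qI * z := by
        calc z * qI = z * (star z * qI * z) := by rw [← hq]
        _ = (z * star z) * qI * z := by noncomm_ring
        _ = qI * z := by rw [hzz, one_mul]
      have h4 := hcomm
      rw [Quaternion.ext_iff] at h4
      obtain ⟨_, _, hJ, hK⟩ := h4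
      simp only [Quaternion.imJ_mul, Quaternion.imK_mul] at hJ hK
      simp [qI] at hJ hK
      exact ⟨z, by linarith, by linarith, hzn, hv⟩
  · rintro ⟨z, hj, hk, hzn, rfl⟩
    have hsq : z.re ^ 2 + z.imI ^ 2 = 1 := by
      have : Quaternion.normSq z = 1 := by
        rw [Quaternion.normSq_eq_norm_mul_self, hzn]; norm_num
      rw [Quaternion.normSq_def', hj, hk] at this
      linarith [this]
    have key : star z * qI * z = qI := by
      ext <;>
        simp only [Quaternion.re_mul, Quaternion.imI_mul, Quaternion.imJ_mul,
          Quaternion.imK_mul] <;>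
        simp [qI, hj, hk] <;>
        nlinarith [hsq]
    rw [star_mul]
    calc star u * qI * u = star u * (star z * qI * z) * u := by rw [key]
    _ = star u * star z * qI * (z * u) := by noncomm_ring
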